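/- Monotonicity of relative predimension in the base: for every real α ≥ 0 and all finite sets A, B, C of vertices of a simple graph G with B ∩ C ⊆ A, one has δ_α(A ∪ B ∪ C) − δ_α(A ∪ C) ≤ δ_α(A ∪ B) − δ_α(A); that is, the relative predimension of B over A∪C is at most the relative predimension of B over A. -/

import Mathlib

/-- The number of edges of `G` with both endpoints in the finite set `s`. -/
noncomputable def eCount {V : Type*} (G : SimpleGraph V) (s : Finset V) : ℕ :=
  {e : Sym2 V | e ∈ G.edgeSet ∧ ∀ v ∈ e, v ∈ s}.ncard

/-- The predimension `δ_α(s) = |s| - α·e(s)`. -/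
noncomputable def pdim {V : Type*} (G : SimpleGraph V) (α : ℝ) (s : Finset V) : ℝ :=
  (s.card : ℝ) - α * (eCount G s : ℝ)

lemma eSet_finite {V : Type*} [DecidableEq V] (G : SimpleGraph V) (s : Finset V) :
    {e : Sym2 V | e ∈ G.edgeSet ∧ ∀ v ∈ e, v ∈ s}.Finite := by
  apply Set.Finite.subset s.sym2.finite_toSet
  intro e he
  induction e using Sym2.ind with
  | _ a b => exact Finset.mem_coe.2 <| Finset.mk_mem_sym2_iff.2 ⟨he.2 a (Sym2.mem_mk_left a b), he.2 b (Sym2.mem_mk_right a b)⟩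

lemma eCount_supermod {V : Type*} [DecidableEq V] (G : SimpleGraph V) (S T : Finset V) :
    eCount G S + eCount G T ≤ eCount G (S ∪ T) + eCount G (S ∩ T) := by
  classical
  set P : Finset V → Set (Sym2 V) := fun s => {e : Sym2 V | e ∈ G.edgeSet ∧ ∀ v ∈ e, v ∈ s}
  have hinter : P S ∩ P T = P (S ∩ T) := by
    ext e; simp only [P, Set.mem_inter_iff, Set.mem_setOf_eq, Finset.mem_inter]
    constructor
    · rintro ⟨⟨he, h1⟩, ⟨_, h2⟩⟩; exact ⟨he, fun v hv => ⟨h1 v hv, h2 v hv⟩⟩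
    · rintro ⟨he, h1⟩; exact ⟨⟨he, fun v hv => (h1 v hv).1⟩, ⟨he, fun v hv => (h1 v hv).2⟩⟩
  have hunion : P S ∪ P T ⊆ P (S ∪ T) := by
    rintro e (⟨he, h1⟩ | ⟨he, h1⟩)
    · exact ⟨he, fun v hv => Finset.mem_union_left _ (h1 v hv)⟩
    · exact ⟨he, fun v hv => Finset.mem_union_right _ (h1 v hv)⟩
  have key : (P S).ncard + (P T).ncard = (P S ∪ P T).ncard + (P S ∩ P T).ncard :=
    (Set.ncard_union_add_ncard_inter _ _ (eSet_finite G S) (eSet_finite G T)).symm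
  have h1 : (P S ∪ P T).ncard ≤ (P (S ∪ T)).ncard :=
    Set.ncard_le_ncard hunion (eSet_finite G (S ∪ T))
  unfold eCount
  rw [show ({e : Sym2 V | e ∈ G.edgeSet ∧ ∀ v ∈ e, v ∈ S} : Set (Sym2 V)) = P S from rfl]
  rw [show ({e : Sym2 V | e ∈ G.edgeSet ∧ ∀ v ∈ e, v ∈ T} : Set (Sym2 V)) = P T from rfl]
  rw [show ({e : Sym2 V | e ∈ G.edgeSet ∧ ∀ v ∈ e, v ∈ S ∪ T} : Set (Sym2 V)) = P (S ∪ T) from rfl]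
  rw [show ({e : Sym2 V | e ∈ G.edgeSet ∧ ∀ v ∈ e, v ∈ S ∩ T} : Set (Sym2 V)) = P (S ∩ T) from rfl]
  rw [key, hinter]
  omega

/-- Monotonicity of the relative predimension in the base. -/
theorem pdim_rel_mono_base {V : Type*} [DecidableEq V] (G : SimpleGraph V)
    (α : ℝ) (hα : 0 ≤ α) (A B C : Finset V) (h : B ∩ C ⊆ A) :
    pdim G α (A ∪ B ∪ C) - pdim G α (A ∪ C) ≤ pdim G α (A ∪ B) - pdim G α A := by
  have hint : (A ∪ B) ∩ (A ∪ C) = A := by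
    apply Finset.Subset.antisymm
    · intro v hv
      simp only [Finset.mem_inter, Finset.mem_union] at hv
      rcases hv with ⟨h1 | h1, h2 | h2⟩
      · exact h1
      · exact h1
      · exact h2
      · exact h (Finset.mem_inter.2 ⟨h1, h2⟩)
    · intro v hv
      simp [hv]
  have huni : (A ∪ B) ∪ (A ∪ C) = A ∪ B ∪ C := by
    rw [Finset.union_union_union_comm, Finset.union_self, ← Finset.union_assoc]
  have hcard : ((A ∪ B) ∪ (A ∪ C)).card + ((A ∪ B) ∩ (A ∪ C)).card
      = (A ∪ B).card + (A ∪ C).card := Finset.card_union_add_card_inter _ _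
  rw [hint, huni] at hcard
  have hedge := eCount_supermod G (A ∪ B) (A ∪ C)
  rw [hint, huni] at hedge
  unfold pdim
  have hc : ((A ∪ B ∪ C).card : ℝ) + A.card = (A ∪ B).card + (A ∪ C).card := by
    exact_mod_cast hcard
  have he : ((eCount G (A ∪ B)) : ℝ) + eCount G (A ∪ C)
      ≤ eCount G (A ∪ B ∪ C) + eCount G A := by exact_mod_cast hedge
  nlinarith [mul_le_mul_of_nonneg_left he hα]
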